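/- Let F be a homogeneous polynomial of degree d in n+1 variables with Waring rank r, and let f(x₁,...,xₙ) = F(1,x₁,...,xₙ) be its dehomogenization. Then the catalecticant-type matrix H^□_{f*} = (f*(x^{α+β})) indexed by |α| ≤ ⌈d/2⌉, |β| ≤ ⌊d/2⌋ has rank at most r. -/

import Mathlib

open MvPolynomial

noncomputable section

variable {k : Type*}

def mBin [Field k] {n : ℕ} (d : ℕ) (α : Fin n →₀ ℕ) : k :=
  (d.factorial : k) /
    (((α.prod fun _ m => m.factorial : ℕ) : k) * ((d - α.sum fun _ m => m).factorial : ℕ))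

/-- The apolar product on polynomials of degree at most `d`. -/
def apolar [Field k] {n : ℕ} (d : ℕ) (f g : MvPolynomial (Fin n) k) : k :=
  ∑ α ∈ f.support, f.coeff α * g.coeff α / mBin d α

/-- Dehomogenization with respect to the variable `x₀`. -/
def dehom [CommSemiring k] {n : ℕ} (F : MvPolynomial (Fin (n+1)) k) :
    MvPolynomial (Fin n) k :=
  aeval (fun i => Fin.cases 1 X i) F

section Helpers
open Finset
set_option linter.unusedSectionVars false
variable [Field k] [CharZero k] {n : ℕ}

lemma mBin_ne_zero (d : ℕ) (γ : Fin n →₀ ℕ) : (mBin d γ : k) ≠ 0 := by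
  unfold mBin
  apply div_ne_zero
  · exact_mod_cast Nat.cast_ne_zero.mpr (Nat.factorial_ne_zero d)
  · apply mul_ne_zero <;>
    · rw [Nat.cast_ne_zero]
      first
      | exact Nat.factorial_ne_zero _
      | exact Finset.prod_ne_zero_iff.mpr fun i _ => Nat.factorial_ne_zero _

lemma apolar_monomial (d : ℕ) (f : MvPolynomial (Fin n) k) (γ : Fin n →₀ ℕ) :
    apolar d f (monomial γ 1) = f.coeff γ / mBin d γ := by
  unfold apolar
  by_cases h : γ ∈ f.support
  · rw [Finset.sum_eq_single γ]
    · simp [coeff_monomial]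
    · intro b _ hb
      rw [coeff_monomial, if_neg (by exact fun he => hb he.symm)]
      simp
    · exact fun h' => absurd h h'
  · have h0 : f.coeff γ = 0 := by simpa using h
    rw [h0, zero_div]
    refine Finset.sum_eq_zero fun b hb => ?_
    rw [coeff_monomial, if_neg (by rintro rfl; exact h hb)]
    simp

lemma deg_one_exponent {m : ℕ} {e : Fin m →₀ ℕ} (he : e.degree = 1) :
    ∃ j, e = Finsupp.single j 1 := by
  have hs : ∑ j, e j = 1 := by
    rw [← he, Finsupp.degree]
    exact (Finset.sum_subset (Finset.subset_univ _)
      (fun x _ hx => Finsupp.notMem_support_iff.mp hx)).symm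
  have hex : ∃ j, e j ≠ 0 := by
    by_contra hc
    push_neg at hc
    simp [hc] at hs
  obtain ⟨j, hj⟩ := hex
  have h1 : e j = 1 := by
    have h2 := Finset.single_le_sum (f := e) (fun i _ => Nat.zero_le _)
      (Finset.mem_univ j)
    omega
  refine ⟨j, Finsupp.ext fun i => ?_⟩
  rw [Finsupp.single_apply]
  by_cases hij : j = i
  · subst hij; simpa using h1
  · rw [if_neg hij]
    have hrest : ∑ i ∈ Finset.univ.erase j, e i = 0 := by
      have h3 := Finset.add_sum_erase Finset.univ e (Finset.mem_univ j)
      omega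
    exact Finset.sum_eq_zero_iff.mp hrest i (Finset.mem_erase.mpr ⟨fun h => hij h.symm, Finset.mem_univ i⟩)

lemma lin_decomp {m : ℕ} (p : MvPolynomial (Fin m) k) (hp : p.IsHomogeneous 1) :
    p = ∑ j : Fin m, C (coeff (Finsupp.single j 1) p) * X j := by
  apply MvPolynomial.ext
  intro e
  rw [coeff_sum]
  simp only [coeff_C_mul, coeff_X', mul_ite, mul_one, mul_zero]
  by_cases he : ∃ j, Finsupp.single j 1 = e
  · obtain ⟨j, rfl⟩ := he
    rw [Finset.sum_eq_single j]
    · simp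
    · intro b _ hb
      rw [if_neg]
      intro h
      exact hb (by simpa using (Finsupp.single_left_injective one_ne_zero) h)
    · simp
  · rw [Finset.sum_eq_zero fun b _ => if_neg fun hb => he ⟨b, hb⟩]
    by_contra h
    have hd := hp h
    replace hd : e.degree = 1 := by rw [Finsupp.degree_eq_weight_one]; exact hd
    obtain ⟨j, rfl⟩ := deg_one_exponent hd
    exact he ⟨j, rfl⟩

def kap {n : ℕ} (d : ℕ) (γ : Fin n →₀ ℕ) : Fin (n+1) → ℕ :=
  fun j => Fin.cases (d - γ.sum fun _ m => m) (fun j' => γ j') j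

omit [Field k] [CharZero k] in
lemma gsum_eq (γ : Fin n →₀ ℕ) : (γ.sum fun _ m => m) = ∑ j, γ j :=
  Finsupp.sum_fintype _ _ (fun _ => rfl)

lemma sum_kap (d : ℕ) (γ : Fin n →₀ ℕ) (hγ : (γ.sum fun _ m => m) ≤ d) :
    ∑ j, kap d γ j = d := by
  rw [Fin.sum_univ_succ]
  simp only [kap, Fin.cases_zero, Fin.cases_succ]
  rw [gsum_eq] at hγ ⊢
  omega

lemma multinomial_kap (d : ℕ) (γ : Fin n →₀ ℕ) (hγ : (γ.sum fun _ m => m) ≤ d) :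
    (Nat.multinomial Finset.univ (kap d γ) : k) = mBin d γ := by
  have hspec := Nat.multinomial_spec Finset.univ (kap d γ)
  rw [sum_kap d γ hγ] at hspec
  have hprod : ∏ j, (kap d γ j).factorial
      = (d - γ.sum fun _ m => m).factorial * ∏ j : Fin n, (γ j).factorial := by
    rw [Fin.prod_univ_succ]
    simp [kap]
  have hgp : (γ.prod fun _ m => m.factorial) = ∏ j : Fin n, (γ j).factorial :=
    Finsupp.prod_fintype _ _ (fun _ => rfl)
  unfold mBin
  rw [eq_div_iff (by
    apply mul_ne_zero <;> rw [Nat.cast_ne_zero]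
    · exact hgp ▸ Finset.prod_ne_zero_iff.mpr fun i _ => Nat.factorial_ne_zero _
    · exact Nat.factorial_ne_zero _)]
  rw [hgp]
  rw [hprod] at hspec
  push_cast [← hspec]
  ring

lemma coeff_linpow (d : ℕ) (c : Fin (n+1) → k) (γ : Fin n →₀ ℕ)
    (hγ : (γ.sum fun _ m => m) ≤ d) :
    coeff γ ((C (c 0) + ∑ j : Fin n, C (c j.succ) * X j) ^ d)
      = mBin d γ * (c 0 ^ (d - γ.sum fun _ m => m) * ∏ j, c j.succ ^ γ j) := by
  classical
  have hrw : C (c 0) + ∑ j : Fin n, C (c j.succ) * X j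
      = ∑ j : Fin (n+1),
          (Fin.cases (C (c 0)) (fun j' => C (c j'.succ) * X j') j :
            MvPolynomial (Fin n) k) := by
    rw [Fin.sum_univ_succ]; simp
  have hterm : ∀ κ : Fin (n+1) → ℕ,
      coeff γ (∏ j : Fin (n+1),
        (Fin.cases (C (c 0)) (fun j' => C (c j'.succ) * X j') j :
          MvPolynomial (Fin n) k) ^ κ j)
      = if ∀ j : Fin n, κ j.succ = γ j then
          c 0 ^ κ 0 * ∏ j : Fin n, c j.succ ^ κ j.succ else 0 := by
    intro κ
    rw [Fin.prod_univ_succ]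
    simp only [Fin.cases_zero, Fin.cases_succ, mul_pow, ← C_pow]
    rw [Finset.prod_mul_distrib, ← map_prod]
    set E : Fin n →₀ ℕ := Finsupp.equivFunOnFinite.symm fun j => κ j.succ with hE
    have hX : (∏ j : Fin n, (X j : MvPolynomial (Fin n) k) ^ κ j.succ)
        = monomial E 1 := by
      rw [← prod_X_pow_eq_monomial]
      refine (Finset.prod_subset (Finset.subset_univ _) fun x _ hx => ?_).symm
      have hx0 : E x = 0 := Finsupp.notMem_support_iff.mp hx
      rw [show κ x.succ = 0 from hx0, pow_zero]
    rw [hX, coeff_C_mul, coeff_C_mul, coeff_monomial]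
    by_cases hcond : ∀ j, κ j.succ = γ j
    · rw [if_pos hcond, if_pos, mul_one]
      exact Finsupp.ext fun j => hcond j
    · rw [if_neg hcond, if_neg, mul_zero, mul_zero]
      intro hEγ
      exact hcond fun j => by rw [← hEγ]; rfl
  rw [hrw, Finset.sum_pow_eq_sum_piAntidiag, coeff_sum]
  rw [Finset.sum_eq_single (kap d γ)]
  · rw [← C_eq_coe_nat, coeff_C_mul, hterm]
    have hc : ∀ j : Fin n, kap d γ j.succ = γ j := fun j => by simp [kap]
    rw [if_pos hc, multinomial_kap d γ hγ]
    simp [kap]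
  · intro κ hκ hne
    rw [← C_eq_coe_nat, coeff_C_mul, hterm, if_neg, mul_zero]
    intro hcond
    apply hne
    have hsum : ∑ j, κ j = d := (Finset.mem_piAntidiag.mp hκ).1
    rw [Fin.sum_univ_succ] at hsum
    have h0 : κ 0 = d - (γ.sum fun _ m => m) := by
      rw [gsum_eq]
      have : ∑ j : Fin n, κ j.succ = ∑ j : Fin n, γ j :=
        Finset.sum_congr rfl fun j _ => hcond j
      omega
    funext j
    refine Fin.cases ?_ (fun j' => ?_) j
    · simpa [kap] using h0
    · simpa [kap] using hcond j'
  · intro hmem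
    exfalso
    apply hmem
    rw [Finset.mem_piAntidiag]
    exact ⟨sum_kap d γ hγ, fun i _ => Finset.mem_univ i⟩

lemma dehom_lin {p : MvPolynomial (Fin (n+1)) k} (hp : p.IsHomogeneous 1) :
    dehom p = C (coeff (Finsupp.single 0 1) p)
      + ∑ j : Fin n, C (coeff (Finsupp.single j.succ 1) p) * X j := by
  conv_lhs => rw [lin_decomp p hp]
  unfold dehom
  rw [map_sum, Fin.sum_univ_succ]
  simp [algebraMap_eq]

theorem stmt10' {d r : ℕ}
    (F : MvPolynomial (Fin (n+1)) k)
    (hex : ∃ (lam : Fin r → k) (L : Fin r → MvPolynomial (Fin (n+1)) k),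
        (∀ i, (L i).IsHomogeneous 1) ∧ F = ∑ i, lam i • L i ^ d) :
    Module.finrank k (Submodule.span k (Set.range
      fun β : {β : Fin n →₀ ℕ // (β.sum fun _ m => m) ≤ d / 2} =>
        fun α : {α : Fin n →₀ ℕ // (α.sum fun _ m => m) ≤ (d + 1) / 2} =>
          apolar d (dehom F) (monomial (α.1 + β.1) (1 : k)))) ≤ r := by
  classical
  obtain ⟨lam, L, hL, hFeq⟩ := hex
  set c : Fin r → Fin (n+1) → k := fun i j => coeff (Finsupp.single j 1) (L i) with hc
  have hdehomL : ∀ i, dehom (L i)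
      = C (c i 0) + ∑ j : Fin n, C (c i j.succ) * X j := fun i => dehom_lin (hL i)
  have hdF : dehom F = ∑ i, C (lam i) * dehom (L i) ^ d := by
    rw [hFeq]
    unfold dehom
    rw [map_sum]
    refine Finset.sum_congr rfl fun i _ => ?_
    rw [smul_eq_C_mul, map_mul, map_pow]
    congr 1
    simp [algebraMap_eq]
  have key : ∀ (γ : Fin n →₀ ℕ), (γ.sum fun _ m => m) ≤ d →
      apolar d (dehom F) (monomial γ 1)
        = ∑ i, lam i * (c i 0 ^ (d - γ.sum fun _ m => m)
            * ∏ j : Fin n, c i j.succ ^ γ j) := by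
    intro γ hγ
    rw [apolar_monomial, hdF, coeff_sum, Finset.sum_div]
    refine Finset.sum_congr rfl fun i _ => ?_
    rw [coeff_C_mul, hdehomL i, coeff_linpow d (c i) γ hγ]
    rw [mul_div_assoc, mul_div_cancel_left₀ _ (mBin_ne_zero d γ)]
  set w : Fin r → ({α : Fin n →₀ ℕ // (α.sum fun _ m => m) ≤ (d+1)/2} → k) :=
    fun i α => c i 0 ^ ((d+1)/2 - α.1.sum fun _ m => m)
      * ∏ j : Fin n, c i j.succ ^ α.1 j with hw
  have hv : ∀ β : {β : Fin n →₀ ℕ // (β.sum fun _ m => m) ≤ d / 2},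
      (fun α : {α : Fin n →₀ ℕ // (α.sum fun _ m => m) ≤ (d + 1) / 2} =>
          apolar d (dehom F) (monomial (α.1 + β.1) (1 : k)))
        = ∑ i, (lam i * (c i 0 ^ (d/2 - β.1.sum fun _ m => m)
            * ∏ j : Fin n, c i j.succ ^ β.1 j)) • w i := by
    intro β
    funext α
    have hsum : ((α.1+β.1).sum fun _ m => m)
        = (α.1.sum fun _ m => m) + (β.1.sum fun _ m => m) :=
      Finsupp.sum_add_index' (fun _ => rfl) (fun _ _ _ => rfl)
    have hα := α.2
    have hβ := β.2
    have hle : ((α.1+β.1).sum fun _ m => m) ≤ d := by omega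
    rw [key _ hle, Finset.sum_apply]
    refine Finset.sum_congr rfl fun i _ => ?_
    simp only [Pi.smul_apply, smul_eq_mul, hw]
    have hd' : d - ((α.1+β.1).sum fun _ m => m)
        = ((d+1)/2 - α.1.sum fun _ m => m) + (d/2 - β.1.sum fun _ m => m) := by
      omega
    rw [hd', pow_add]
    have hprod : ∏ j : Fin n, c i j.succ ^ (α.1+β.1) j
        = (∏ j : Fin n, c i j.succ ^ α.1 j) * ∏ j : Fin n, c i j.succ ^ β.1 j := by
      rw [← Finset.prod_mul_distrib]
      exact Finset.prod_congr rfl fun j _ => by rw [Finsupp.add_apply, pow_add]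
    rw [hprod]
    ring
  have hsub : Set.range
      (fun β : {β : Fin n →₀ ℕ // (β.sum fun _ m => m) ≤ d / 2} =>
        fun α : {α : Fin n →₀ ℕ // (α.sum fun _ m => m) ≤ (d + 1) / 2} =>
          apolar d (dehom F) (monomial (α.1 + β.1) (1 : k)))
      ⊆ ↑(Submodule.span k (Set.range w)) := by
    rintro _ ⟨β, rfl⟩
    beta_reduce
    rw [hv β]
    exact Submodule.sum_mem _ fun i _ =>
      Submodule.smul_mem _ _ (Submodule.subset_span ⟨i, rfl⟩)
  haveI := FiniteDimensional.span_of_finite k (Set.finite_range w)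
  calc Module.finrank k (Submodule.span k _)
      ≤ Module.finrank k (Submodule.span k (Set.range w)) :=
        Submodule.finrank_mono (Submodule.span_le.mpr hsub)
    _ ≤ r := by simpa [Set.finrank] using finrank_range_le_card w

end Helpers

theorem stmt10 [Field k] [IsAlgClosed k] [CharZero k] {n d r : ℕ}
    (F : MvPolynomial (Fin (n+1)) k) (hF : F.IsHomogeneous d)
    (hex : ∃ (lam : Fin r → k) (L : Fin r → MvPolynomial (Fin (n+1)) k),
        (∀ i, (L i).IsHomogeneous 1) ∧ F = ∑ i, lam i • L i ^ d)
    (hmin : ∀ (r' : ℕ) (lam : Fin r' → k) (L : Fin r' → MvPolynomial (Fin (n+1)) k),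
        (∀ i, (L i).IsHomogeneous 1) → F = ∑ i, lam i • L i ^ d → r ≤ r') :
    Module.finrank k (Submodule.span k (Set.range
      fun β : {β : Fin n →₀ ℕ // (β.sum fun _ m => m) ≤ d / 2} =>
        fun α : {α : Fin n →₀ ℕ // (α.sum fun _ m => m) ≤ (d + 1) / 2} =>
          apolar d (dehom F) (monomial (α.1 + β.1) (1 : k)))) ≤ r :=
  stmt10' F hex

end
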